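/- Let α₁ < α₂ < … < α_n be real numbers and let X = {γ(α₁), …, γ(α_n)} on the moment curve γ(α) = (α, α², …, α^d) ⊆ ℝ^d. Let A₁, …, A_r be the alternating partition A_i = {γ(α_j) : j ≡ i (mod r)}. If n ≥ (d+1)(⌊d/2⌋+1)(r−1) + 1, then ⋂_{i=1}^r conv(A_i) ≠ ∅. -/

import Mathlib

open Finset Polynomial


/-- number of sign changes of `p` before index `j` -/
private def chg (p : ℕ → Bool) (j : ℕ) : ℕ := #{k ∈ range j | p k ≠ p (k + 1)}

private lemma chg_mono (p : ℕ → Bool) {j j' : ℕ} (h : j ≤ j') : chg p j ≤ chg p j' :=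
  card_le_card (filter_subset_filter _ (range_subset_range.2 h))

private lemma chg_succ (p : ℕ → Bool) (j : ℕ) :
    chg p (j + 1) = chg p j + (if p j ≠ p (j + 1) then 1 else 0) := by
  unfold chg
  rw [range_add_one, filter_insert]
  split
  · rw [card_insert_of_notMem (by simp)]
  · simp

/-- parity of the change count -/
private lemma chg_parity (p : ℕ → Bool) (j : ℕ) :
    chg p j % 2 = (if p j = p 0 then 0 else 1) := by
  induction j with
  | zero => simp [chg]
  | succ j ih =>
    rw [chg_succ, Nat.add_mod, ih]
    cases hj : p j <;> cases hj1 : p (j+1) <;> cases h0 : p 0 <;> simp [hj, hj1, h0]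

/-- if the change count is equal at `j ≤ j'`, then `p` is constant on `[j, j']`. -/
private lemma chg_const (p : ℕ → Bool) {j j' : ℕ} (hle : j ≤ j') (heq : chg p j = chg p j')
    {k : ℕ} (hk1 : j ≤ k) (hk2 : k ≤ j') : p k = p j := by
  induction k with
  | zero => cases Nat.le_zero.1 hk1; rfl
  | succ k ih =>
    rcases Nat.lt_or_ge j (k+1) with h | h
    · have hkj : j ≤ k := by omega
      have hpk : p k = p j := ih hkj (by omega)
      by_contra hne
      have hch : p k ≠ p (k + 1) := fun hc => hne (hc ▸ hpk)
      have h1 : chg p (k+1) = chg p k + 1 := by rw [chg_succ, if_pos hch]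
      have h2 : chg p j ≤ chg p k := chg_mono p hkj
      have h3 : chg p (k+1) ≤ chg p j' := chg_mono p hk2
      omega
    · have : j = k + 1 := by omega
      rw [this]

/-- The combinatorial core: if a boolean predicate on `[0,n)` avoids the residue class
`i mod r` and has at most `d'` sign changes, then it holds at most `(d'/2+1)*(r-1)` times. -/
private lemma comb_core (p : ℕ → Bool) (n r i d' : ℕ) (hi : i < r)
    (hp : ∀ j < n, j % r = i → p j = false)
    (hc : chg p (n - 1) ≤ d') :
    #{j ∈ range n | p j = true} ≤ (d' / 2 + 1) * (r - 1) := by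
  set B : Finset ℕ := {j ∈ range n | p j = true} with hB
  -- every fiber of `chg p` on `B` has at most `r-1` elements
  have hfiber : ∀ v ∈ B.image (chg p), #{j ∈ B | chg p j = v} ≤ r - 1 := by
    intro v hv
    set Bv : Finset ℕ := {j ∈ B | chg p j = v} with hBv
    rcases Bv.eq_empty_or_nonempty with he | hne
    · simp [he]
    · set a := Bv.min' hne with ha
      have haB : a ∈ Bv := Bv.min'_mem hne
      have hpa : p a = true := (mem_filter.1 ((mem_filter.1 haB).1)).2
      have han : a < n := mem_range.1 (mem_filter.1 ((mem_filter.1 haB).1)).1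
      have hca : chg p a = v := (mem_filter.1 haB).2
      -- the unique element of [a, a+r) that is ≡ i mod r
      obtain ⟨m, hm1, hm2, hm3⟩ : ∃ m, a ≤ m ∧ m < a + r ∧ m % r = i := by
        have h1 := Nat.div_add_mod a r
        have h2 : a % r < r := Nat.mod_lt a (by omega)
        have h3 : r * (a / r + 1) = r * (a / r) + r := by ring
        refine ⟨if a % r ≤ i then r * (a / r) + i else r * (a / r + 1) + i, ?_, ?_, ?_⟩
        · split <;> omega
        · split <;> omega
        · split <;> · rw [Nat.mul_add_mod]; exact Nat.mod_eq_of_lt hi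
      -- all of Bv lies in [a, a+r)
      have hsub : Bv ⊆ Finset.Ico a (a + r) := by
        intro j hj
        have hjB := mem_filter.1 hj
        have hja : a ≤ j := Bv.min'_le j hj
        have hjn : j < n := mem_range.1 (mem_filter.1 hjB.1).1
        have hcj : chg p j = v := hjB.2
        rw [Finset.mem_Ico]
        refine ⟨hja, ?_⟩
        by_contra hge
        -- then [a, j] all true, contains m with residue i
        have hconst : p m = p a := chg_const p hja (hca.trans hcj.symm) hm1 (by omega)
        have := hp m (by omega) hm3
        rw [hconst, hpa] at this
        exact absurd this (by simp)
      -- m is not in Bv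
      have hmB : m ∉ Bv := by
        intro hm
        have hpm := (mem_filter.1 ((mem_filter.1 hm).1)).2
        have hmn : m < n := mem_range.1 (mem_filter.1 ((mem_filter.1 hm).1)).1
        rw [hp m hmn hm3] at hpm
        exact absurd hpm (by simp)
      have : Bv ⊆ (Finset.Ico a (a + r)).erase m := fun j hj =>
        Finset.mem_erase.2 ⟨fun h => hmB (h ▸ hj), hsub hj⟩
      calc #Bv ≤ #((Finset.Ico a (a + r)).erase m) := card_le_card this
        _ = r - 1 := by
            rw [Finset.card_erase_of_mem (Finset.mem_Ico.2 ⟨hm1, hm2⟩), Nat.card_Ico]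
            omega
  have h1 : #B ≤ (r - 1) * #(B.image (chg p)) := card_le_mul_card_image B (r-1) hfiber
  -- the image has at most d'/2+1 elements
  have h2 : #(B.image (chg p)) ≤ d' / 2 + 1 := by
    have hparity : ∀ v ∈ B.image (chg p), v % 2 = (if p 0 then 0 else 1) ∧ v ≤ d' := by
      intro v hv
      obtain ⟨j, hj, rfl⟩ := mem_image.1 hv
      have hjB := mem_filter.1 hj
      have hjn : j < n := mem_range.1 hjB.1
      constructor
      · rw [chg_parity p j, hjB.2]
        cases h0 : p 0 <;> simp [h0]
      · exact le_trans (chg_mono p (by omega)) hc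
    have hinj : Set.InjOn (· / 2) ↑(B.image (chg p)) := by
      intro v hv w hw hvw
      have h1 := hparity v hv
      have h2 := hparity w hw
      simp only at hvw
      omega
    calc #(B.image (chg p)) = #((B.image (chg p)).image (· / 2)) :=
          (card_image_of_injOn hinj).symm
      _ ≤ #(range (d' / 2 + 1)) := by
          apply card_le_card
          intro x hx
          obtain ⟨v, hv, rfl⟩ := mem_image.1 hx
          have := (hparity v hv).2
          rw [mem_range]; omega
      _ = d' / 2 + 1 := card_range _
  calc #B ≤ (r - 1) * #(B.image (chg p)) := h1
    _ ≤ (r - 1) * (d' / 2 + 1) := Nat.mul_le_mul_left _ h2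
    _ = (d' / 2 + 1) * (r - 1) := Nat.mul_comm _ _


/-- Sign changes of a polynomial along an increasing sequence avoiding roots are bounded
by the number of roots, hence by the degree. -/
private lemma chg_le_natDegree (Q : Polynomial ℝ) {n : ℕ} (a : ℕ → ℝ)
    (ha : ∀ {j k : ℕ}, j < k → k < n → a j < a k)
    (hne : ∀ j < n, Q.eval (a j) ≠ 0) :
    chg (fun j => decide (Q.eval (a j) < 0)) (n - 1) ≤ Q.natDegree := by
  classical
  rcases Nat.eq_zero_or_pos n with rfl | hn
  · simp [chg]
  have hQ : Q ≠ 0 := fun h => hne 0 hn (by simp [h])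
  set p : ℕ → Bool := fun j => decide (Q.eval (a j) < 0) with hp
  -- for each sign change, choose a root in the open interval
  have hroot : ∀ k ∈ ({k ∈ range (n-1) | p k ≠ p (k+1)} : Finset ℕ),
      ∃ x ∈ Set.Ioo (a k) (a (k+1)), Q.eval x = 0 := by
    intro k hk
    obtain ⟨hk1, hk2⟩ := mem_filter.1 hk
    have hkn : k + 1 < n := by have := mem_range.1 hk1; omega
    have hlt : a k < a (k+1) := ha (Nat.lt_succ_self k) hkn
    have hcont : ContinuousOn (fun x => Q.eval x) (Set.Icc (a k) (a (k+1))) :=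
      Q.continuous.continuousOn
    have h1 : Q.eval (a k) ≠ 0 := hne k (by omega)
    have h2 : Q.eval (a (k+1)) ≠ 0 := hne (k+1) hkn
    rcases lt_or_gt_of_ne h1 with hneg | hpos
    · -- eval a k < 0, so p k = true, p (k+1) = false, eval a (k+1) > 0
      have : ¬ Q.eval (a (k+1)) < 0 := by
        intro hlt2
        apply hk2
        simp [hp, hneg, hlt2]
      have hpos2 : 0 < Q.eval (a (k+1)) := lt_of_le_of_ne (not_lt.1 this) (Ne.symm h2)
      have := intermediate_value_Ioo (le_of_lt hlt) hcont
        (Set.mem_Ioo.2 ⟨hneg, hpos2⟩)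
      obtain ⟨x, hx, hx0⟩ := this
      exact ⟨x, hx, hx0⟩
    · have : ¬ ¬ Q.eval (a (k+1)) < 0 := by
        intro hge
        apply hk2
        simp only [hp]
        rw [decide_eq_decide]
        constructor
        · intro h; exact absurd h (not_lt.2 (le_of_lt hpos))
        · intro h; exact absurd h hge
      have hneg2 : Q.eval (a (k+1)) < 0 := not_not.1 this
      have := intermediate_value_Ioo' (le_of_lt hlt) hcont
        (Set.mem_Ioo.2 ⟨hneg2, hpos⟩)
      obtain ⟨x, hx, hx0⟩ := this
      exact ⟨x, hx, hx0⟩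
  choose! f hf1 hf2 using hroot
  have hinj : Set.InjOn f ↑({k ∈ range (n-1) | p k ≠ p (k+1)} : Finset ℕ) := by
    intro k hk k' hk' hkk'
    by_contra hne'
    wlog hlt : k < k' generalizing k k'
    · exact this hk' hk hkk'.symm (Ne.symm hne') (by omega)
    have h1 := hf1 k hk
    have h2 := hf1 k' hk'
    have hkn' : k' + 1 < n := by have := mem_range.1 (mem_filter.1 hk').1; omega
    have : a (k+1) ≤ a k' := by
      rcases Nat.eq_or_lt_of_le (Nat.succ_le_of_lt hlt) with he | hl
      · exact le_of_eq (congrArg a he)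
      · exact le_of_lt (ha hl (by omega))
    have : f k < f k' := lt_of_lt_of_le h1.2 (le_trans this (le_of_lt h2.1))
    rw [hkk'] at this
    exact lt_irrefl _ this
  calc #({k ∈ range (n-1) | p k ≠ p (k+1)} : Finset ℕ)
      = #(({k ∈ range (n-1) | p k ≠ p (k+1)} : Finset ℕ).image f) :=
        (card_image_of_injOn hinj).symm
    _ ≤ #Q.roots.toFinset := by
        apply card_le_card
        intro x hx
        obtain ⟨k, hk, rfl⟩ := mem_image.1 hx
        rw [Multiset.mem_toFinset, mem_roots hQ]
        exact hf2 k hk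
    _ ≤ Multiset.card Q.roots := Q.roots.toFinset_card_le
    _ ≤ Q.natDegree := Q.card_roots'

/-- Lemma 3.2 (alternating partition lemma): if `n ≥ (d+1)(⌊d/2⌋+1)(r−1) + 1` points
lie in increasing order on the moment curve in `ℝ^d`, then the convex hulls of the
parts of the alternating partition into `r` parts have a common point. -/
theorem alternating_partition_moment_curve (d n r : ℕ) (hd : 1 ≤ d) (hr : 1 ≤ r)
    (hn : (d + 1) * (d / 2 + 1) * (r - 1) + 1 ≤ n)
    (α : Fin n → ℝ) (hα : StrictMono α) :
    (⋂ i : Fin r, convexHull ℝ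
      (((Finset.univ.filter (fun j : Fin n => j.val % r = i.val)).image
        (fun j : Fin n => (fun k : Fin d => α j ^ (k.val + 1))) :
          Finset (Fin d → ℝ)) : Set (Fin d → ℝ))).Nonempty := by
  classical
  set γ : ℝ → (Fin d → ℝ) := fun x => (fun k : Fin d => x ^ (k.val + 1)) with hγ
  set t : ℕ := (d / 2 + 1) * (r - 1) with ht
  have hnt : (d + 1) * t + 1 ≤ n := by
    have : (d + 1) * t = (d + 1) * (d / 2 + 1) * (r - 1) := by rw [ht, Nat.mul_assoc]
    omega
  have hn1 : 1 ≤ n := by omega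
  -- Step 1: Helly's theorem gives a "centerpoint" O
  set F : Finset (Fin n) → Set (Fin d → ℝ) :=
    fun S => convexHull ℝ ((S.image (fun j => γ (α j)) : Finset (Fin d → ℝ)) : Set (Fin d → ℝ))
    with hF
  set 𝒮 : Finset (Finset (Fin n)) := Finset.powersetCard (n - t) Finset.univ with h𝒮
  have hOex : (⋂ S ∈ 𝒮, F S).Nonempty := by
    apply Convex.helly_theorem' (𝕜 := ℝ)
    · intro S _; exact convex_convexHull ℝ _
    · intro I hI hIcard
      rw [Module.finrank_fin_fun] at hIcard
      -- find a common index j in all S ∈ I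
      set U : Finset (Fin n) := I.biUnion (fun S => Sᶜ) with hU
      have hUcard : #U ≤ (d + 1) * t := by
        calc #U ≤ ∑ S ∈ I, #(Sᶜ) := Finset.card_biUnion_le
          _ ≤ ∑ _S ∈ I, t := by
              apply Finset.sum_le_sum
              intro S hS
              have hScard : #S = n - t := (Finset.mem_powersetCard.1 (hI hS)).2
              rw [Finset.card_compl, hScard, Fintype.card_fin]
              omega
          _ = #I * t := by rw [Finset.sum_const, smul_eq_mul]
          _ ≤ (d + 1) * t := Nat.mul_le_mul_right _ hIcard
      have : #(Uᶜ) ≠ 0 := by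
        rw [Finset.card_compl, Fintype.card_fin]
        omega
      obtain ⟨j, hj⟩ := Finset.card_ne_zero.1 this |>.exists_mem
      refine ⟨γ (α j), Set.mem_iInter₂.2 fun S hS => ?_⟩
      have hjS : j ∈ S := by
        by_contra hjS
        exact (Finset.mem_compl.1 hj) (Finset.mem_biUnion.2 ⟨S, hS, Finset.mem_compl.2 hjS⟩)
      exact subset_convexHull ℝ _ (by exact_mod_cast Finset.mem_image_of_mem _ hjS)
  obtain ⟨O, hO⟩ := hOex
  have hOmem : ∀ S : Finset (Fin n), #S = n - t → O ∈ F S := by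
    intro S hS
    exact Set.mem_iInter₂.1 hO S (Finset.mem_powersetCard.2 ⟨Finset.subset_univ _, hS⟩)
  -- Step 2: show O lies in each conv(A_i)
  refine ⟨O, Set.mem_iInter.2 fun i => ?_⟩
  by_contra hOi
  set A : Set (Fin d → ℝ) :=
    (((Finset.univ.filter (fun j : Fin n => j.val % r = i.val)).image
      (fun j : Fin n => (fun k : Fin d => α j ^ (k.val + 1))) :
        Finset (Fin d → ℝ)) : Set (Fin d → ℝ)) with hA
  -- separate O from conv(A) by a hyperplane
  obtain ⟨f, u, hfu, hfA⟩ :=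
    geometric_hahn_banach_point_closed (convex_convexHull ℝ A)
      ((A.toFinite).isClosed_convexHull (𝕜 := ℝ)) hOi
  -- choose a level c' strictly between f O and u avoiding the finitely many values f(γ(α j))
  obtain ⟨c', hc'mem, hc'notin⟩ :=
    (Set.Ioo_infinite hfu).exists_notMem_finset
      (Finset.univ.image (fun j : Fin n => f (γ (α j))))
  have hc'ne : ∀ j : Fin n, f (γ (α j)) ≠ c' := by
    intro j h
    exact hc'notin (Finset.mem_image.2 ⟨j, Finset.mem_univ _, h⟩)
  have hc'O : f O < c' := hc'mem.1
  have hc'u : c' < u := hc'mem.2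
  have hAgt : ∀ j : Fin n, (j : ℕ) % r = i.val → c' < f (γ (α j)) := by
    intro j hj
    refine lt_trans hc'u (hfA _ ?_)
    exact subset_convexHull ℝ A (by
      simp only [hA, Finset.coe_image, Set.mem_image, Finset.mem_coe, Finset.mem_filter]
      exact ⟨j, by simp [hj], rfl⟩)
  set B : Finset (Fin n) := Finset.univ.filter (fun j => f (γ (α j)) < c') with hBdef
  -- Step 2a: B has more than t elements (centerpoint property)
  have hBlarge : t + 1 ≤ #B := by
    by_contra hsmall
    have hBc : n - t ≤ #(Bᶜ) := by
      rw [Finset.card_compl, Fintype.card_fin]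
      omega
    obtain ⟨S, hSsub, hScard⟩ := Finset.exists_subset_card_eq hBc
    have hOS := hOmem S hScard
    have hhalf : F S ⊆ {x : Fin d → ℝ | c' < f x} := by
      rw [hF]
      apply convexHull_min
      · intro x hx
        obtain ⟨j, hjS, rfl⟩ := Finset.mem_image.1 (by exact_mod_cast hx)
        have hjB : j ∉ B := Finset.mem_compl.1 (hSsub hjS)
        have h1 : ¬ f (γ (α j)) < c' := fun h => hjB (Finset.mem_filter.2 ⟨Finset.mem_univ _, h⟩)
        exact lt_of_le_of_ne (not_lt.1 h1) (Ne.symm (hc'ne j))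
      · exact convex_halfSpace_gt (IsLinearMap.mk f.map_add f.map_smul) c'
    have := hhalf hOS
    simp only [Set.mem_setOf_eq] at this
    linarith
  -- Step 2b: B has at most t elements (sign changes of polynomial)
  set w : Fin d → ℝ := fun k => f (fun j => if k = j then 1 else 0) with hw
  set Q : Polynomial ℝ := (∑ k : Fin d, C (w k) * X ^ (k.val + 1)) - C c' with hQ
  have hQeval : ∀ x : ℝ, Q.eval x = f (γ x) - c' := by
    intro x
    have hfx : f (γ x) = ∑ k : Fin d, (γ x k) • w k := by
      exact LinearMap.pi_apply_eq_sum_univ (f : (Fin d → ℝ) →ₗ[ℝ] ℝ) (γ x)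
    rw [hQ]
    simp only [eval_sub, eval_C, eval_finset_sum, eval_mul, eval_pow, eval_X]
    rw [hfx]
    congr 1
    apply Finset.sum_congr rfl
    intro k _
    simp [hγ, smul_eq_mul, mul_comm]
  have hQdeg : Q.natDegree ≤ d := by
    rw [hQ]
    refine le_trans (natDegree_sub_le _ _) (max_le ?_ (by simp))
    apply natDegree_sum_le_of_forall_le
    intro k _
    refine le_trans (natDegree_mul_le) ?_
    simp only [natDegree_C, natDegree_X_pow, zero_add]
    omega
  -- the sequence a : ℕ → ℝ extending α
  set a : ℕ → ℝ := fun j => α ⟨min j (n - 1), by omega⟩ with ha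
  have haj : ∀ (j : ℕ) (hj : j < n), a j = α ⟨j, hj⟩ := by
    intro j hj
    simp only [ha]
    congr 1
    exact Fin.ext (by simp; omega)
  have hamono : ∀ {j k : ℕ}, j < k → k < n → a j < a k := by
    intro j k hjk hkn
    rw [haj j (by omega), haj k hkn]
    exact hα (by exact hjk)
  have hane : ∀ j < n, Q.eval (a j) ≠ 0 := by
    intro j hj
    rw [hQeval, haj j hj]
    exact sub_ne_zero_of_ne (hc'ne _)
  set p : ℕ → Bool := fun j => decide (Q.eval (a j) < 0) with hp
  have hchg : chg p (n - 1) ≤ d := le_trans (chg_le_natDegree Q a hamono hane) hQdeg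
  have hpfalse : ∀ j < n, j % r = i.val → p j = false := by
    intro j hj hji
    have h1 : c' < f (γ (α ⟨j, hj⟩)) := hAgt ⟨j, hj⟩ hji
    simp only [hp, decide_eq_false_iff_not, not_lt]
    rw [hQeval, haj j hj]
    linarith
  have hcount := comb_core p n r i.val d (by
      have := i.isLt; omega) hpfalse hchg
  -- #B equals the count of true values of p
  have hBeq : #B = #{j ∈ range n | p j = true} := by
    apply Finset.card_bij (fun (j : Fin n) _ => (j : ℕ))
    · intro j hj
      rw [Finset.mem_filter]
      refine ⟨Finset.mem_range.2 j.isLt, ?_⟩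
      simp only [hp, decide_eq_true_eq]
      rw [hQeval, haj j.val j.isLt]
      have : f (γ (α j)) < c' := (Finset.mem_filter.1 hj).2
      simp only [Fin.eta]
      linarith
    · intro j _ j' _ h
      exact Fin.ext h
    · intro k hk
      obtain ⟨hk1, hk2⟩ := Finset.mem_filter.1 hk
      have hkn := Finset.mem_range.1 hk1
      refine ⟨⟨k, hkn⟩, ?_, rfl⟩
      rw [Finset.mem_filter]
      refine ⟨Finset.mem_univ _, ?_⟩
      simp only [hp, decide_eq_true_eq] at hk2
      rw [hQeval, haj k hkn] at hk2
      linarith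
  rw [hBeq] at hBlarge
  rw [← ht] at hcount
  omega
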